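/- Let λ > 0 and let u : [0,∞) → ℝ be continuous with u(x) > 0 for all x ≥ 0, continuously differentiable on (0,∞), with ∫₀^∞ u(x)² g(x) dx < ∞ and ∫₀^∞ u'(x)² g(x) dx < ∞. Assume that x ↦ g(x)u'(x) extends to a continuous function on [0,∞) which is differentiable on (0,1) ∪ (1,∞) with (g(x)u'(x))' = λ g(x) u(x) there. Then: (a) x ↦ g(x)u'(x) is nondecreasing on [0,∞) and lim_{x→∞} g(x)u'(x) = 0; (b) u'(x) ≤ 0 for every x ∈ (0,∞); (c) there exist C > 0 and δ > 0 such that g(x)u(x) ≤ C e^{−δx} for every x ≥ 1. -/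

import Mathlib

open MeasureTheory Set

/-- The weight `g(x) = 4` for `x ≤ 1` and `g(x) = 4(2x−1)` for `x > 1`. -/
noncomputable def g (x : ℝ) : ℝ := if x ≤ 1 then 4 else 4 * (2 * x - 1)

/-- `u` belongs to the weighted Sobolev space `H¹(ℝ⁺, g dx)` with derivative
`u'`: it is locally absolutely continuous on `[0,∞)` (primitive of `u'`) and
both `u² g` and `u'² g` are integrable on `(0,∞)`. -/
def InH1g (u u' : ℝ → ℝ) : Prop :=
  IntegrableOn (fun x => (u x) ^ 2 * g x) (Ioi 0) ∧
    IntegrableOn (fun x => (u' x) ^ 2 * g x) (Ioi 0) ∧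
    ∀ a b : ℝ, 0 ≤ a → 0 ≤ b → u b - u a = ∫ x in a..b, u' x

/-- The weighted mass `∫₀^∞ u² g dx`. -/
noncomputable def massg (u : ℝ → ℝ) : ℝ := ∫ x in Ioi (0 : ℝ), (u x) ^ 2 * g x

/-- The reduced energy `Ẽ_{q,α}(u) = (1/2)∫₀^∞ u'² g dx − (α/q)|u(0)|^q`. -/
noncomputable def energyg (q α : ℝ) (u u' : ℝ → ℝ) : ℝ :=
  (1 / 2) * (∫ x in Ioi (0 : ℝ), (u' x) ^ 2 * g x) - (α / q) * |u 0| ^ q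

/-- The set of reduced energies over `X_μ = {u : 0 < ∫ u² g ≤ μ}`;
its infimum is `𝓔̃_{q,α}(μ)`. -/
def levelSetg (q α μ : ℝ) : Set ℝ :=
  {E | ∃ u u' : ℝ → ℝ, InH1g u u' ∧ 0 < massg u ∧ massg u ≤ μ ∧
    E = energyg q α u u'}

lemma g_ge (x : ℝ) : 4 ≤ g x := by
  unfold g; split
  · exact le_rfl
  · nlinarith [lt_of_not_ge (by assumption : ¬ x ≤ 1)]

lemma g_pos (x : ℝ) : 0 < g x := lt_of_lt_of_le (by norm_num) (g_ge x)

lemma g_le (x : ℝ) (hx : 1 ≤ x) : g x ≤ 8 * x := by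
  unfold g; split <;> nlinarith

lemma g_cont : Continuous g := by
  unfold g
  apply Continuous.if_le (by continuity) (by continuity) continuous_id continuous_const
  intro x hx; simp at hx; norm_num [hx]

private lemma partC (lam : ℝ) (hlam : 0 < lam) (u : ℝ → ℝ)
    (hcont : ContinuousOn u (Ici 0)) (hpos : ∀ x : ℝ, 0 ≤ x → 0 < u x)
    (G : ℝ → ℝ) (hGcont : ContinuousOn G (Ici 0))
    (hGeq : ∀ x ∈ Ioi (0 : ℝ), G x = g x * deriv u x)
    (hode : ∀ x ∈ Ioo (0 : ℝ) 1 ∪ Ioi 1, HasDerivAt G (lam * g x * u x) x)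
    (Gnonpos : ∀ x ∈ Ici (0:ℝ), G x ≤ 0)
    (δ : ℝ) (hδpos : 0 < δ) (hδ2 : δ^2 = lam)
    (uanti : AntitoneOn u (Ici (1:ℝ)))
    (φ : ℝ → ℝ) (hφdef : φ = fun x => -(G x * u x))
    (hφdecay : ∀ x : ℝ, 1 ≤ x →
      φ x ≤ (φ 1 * Real.exp (2*δ)) * Real.exp (-(2*δ*x))) :
    ∃ C : ℝ, 0 < C ∧ ∃ δ' : ℝ, 0 < δ' ∧
        ∀ x : ℝ, 1 ≤ x → g x * u x ≤ C * Real.exp (-δ' * x) := by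
  -- key integral bound: for x ≥ 2, 4 λ u(x+1) ≤ -G x
  have hkey : ∀ x : ℝ, 2 ≤ x → 4 * lam * u (x+1) ≤ -G x := by
    intro x hx
    have hxx : x ≤ x + 1 := by linarith
    have hFTCG : ∫ t in x..(x+1), lam * g t * u t = G (x+1) - G x := by
      apply intervalIntegral.integral_eq_sub_of_hasDerivAt
      · intro t ht
        rw [uIcc_of_le hxx] at ht
        exact hode t (Or.inr (mem_Ioi.2 (by linarith [ht.1])))
      · apply ContinuousOn.intervalIntegrable
        apply ContinuousOn.mul ((continuous_const.mul g_cont).continuousOn)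
        apply hcont.mono
        rw [uIcc_of_le hxx]
        intro t ht; exact le_trans (by linarith) ht.1
    have hmemx1 : (1:ℝ) ≤ x + 1 := by linarith
    have hulow : ∫ t in x..(x+1), (4 * lam * u (x+1)) ≤ ∫ t in x..(x+1), lam * g t * u t := by
      apply intervalIntegral.integral_mono_on hxx
        (intervalIntegrable_const)
      · apply ContinuousOn.intervalIntegrable
        apply ContinuousOn.mul ((continuous_const.mul g_cont).continuousOn)
        apply hcont.mono
        rw [uIcc_of_le hxx]
        intro t ht; exact le_trans (by linarith) ht.1
      · intro t ht
        have ht1 : (1:ℝ) ≤ t := by linarith [ht.1]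
        have hut : u (x+1) ≤ u t := uanti ht1 hmemx1 ht.2
        have hup : 0 < u (x+1) := hpos _ (by linarith)
        have hutpos : 0 < u t := lt_of_lt_of_le hup hut
        have ha : 0 ≤ lam * (g t - 4) * u t :=
          mul_nonneg (mul_nonneg hlam.le (by linarith [g_ge t])) hutpos.le
        have hb : 0 ≤ lam * (u t - u (x+1)) := mul_nonneg hlam.le (by linarith)
        nlinarith [ha, hb]
    rw [intervalIntegral.integral_const] at hulow
    simp at hulow
    have hG1 : G (x+1) ≤ 0 := Gnonpos _ (show (0:ℝ) ≤ x+1 by linarith)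
    nlinarith
  -- pointwise: 4 λ u(x+1)² ≤ φ x for x ≥ 2
  have hsq : ∀ x : ℝ, 2 ≤ x → 4 * lam * (u (x+1))^2 ≤ φ x := by
    intro x hx
    have h1 := hkey x hx
    have hux : u (x+1) ≤ u x := uanti (show (1:ℝ) ≤ x by linarith)
      (show (1:ℝ) ≤ x+1 by linarith) (by linarith)
    have hup : 0 < u (x+1) := hpos _ (by linarith)
    have hux0 : 0 < u x := hpos x (by linarith)
    have : φ x = (-G x) * u x := by rw [hφdef]; ring
    rw [this]
    nlinarith [mul_le_mul_of_nonneg_right h1 hux0.le,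
      mul_le_mul_of_nonneg_left hux (mul_nonneg (by positivity : (0:ℝ) ≤ 4*lam) hup.le)]
  -- constants
  set B := φ 1 * Real.exp (2*δ) / (4*lam) with hBdef
  have hφ1 : 0 ≤ φ 1 := by
    rw [hφdef]; dsimp only
    have := Gnonpos 1 (by norm_num)
    nlinarith [hpos 1 zero_le_one]
  have hB : 0 ≤ B := by positivity
  -- u decay: for y ≥ 3, u y ≤ √B * exp δ * exp (-δ y)
  have hudecay : ∀ y : ℝ, 3 ≤ y → u y ≤ Real.sqrt B * Real.exp (-δ*(y-1)) := by
    intro y hy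
    set x := y - 1 with hxdef
    have hx2 : 2 ≤ x := by rw [hxdef]; linarith
    have hx1 : (1:ℝ) ≤ x := by linarith
    have hxy : x + 1 = y := by rw [hxdef]; ring
    have h1 : 4 * lam * (u y)^2 ≤ φ x := by rw [← hxy]; exact hsq x hx2
    have h2 := hφdecay x hx1
    have h3 : (u y)^2 ≤ B * Real.exp (-(2*δ*x)) := by
      rw [hBdef]
      rw [div_mul_eq_mul_div, le_div_iff₀ (by linarith)]
      nlinarith
    have h4 : (Real.sqrt B * Real.exp (-δ*x))^2 = B * Real.exp (-(2*δ*x)) := by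
      rw [mul_pow, Real.sq_sqrt hB, pow_two, ← Real.exp_add]
      ring_nf
    have h5 : (u y)^2 ≤ (Real.sqrt B * Real.exp (-δ*x))^2 := by rw [h4]; exact h3
    have h6 : 0 ≤ Real.sqrt B * Real.exp (-δ*x) := by positivity
    have := (pow_le_pow_left₀ (hpos y (by linarith)).le · 2)
    exact (pow_le_pow_iff_left₀ (hpos y (by linarith)).le h6 two_ne_zero).1 h5
  -- final assembly
  set C₁ := 16 * Real.sqrt B * Real.exp δ / δ with hC₁def
  set C₂ := 24 * u 1 * Real.exp (3*δ/2) with hC₂def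
  have hu1 : 0 < u 1 := hpos 1 zero_le_one
  have hC₁ : 0 ≤ C₁ := by positivity
  have hC₂ : 0 ≤ C₂ := by
    rw [hC₂def]; nlinarith [mul_pos hu1 (Real.exp_pos (3*δ/2))]
  refine ⟨max C₁ C₂ + 1, by nlinarith [le_max_left C₁ C₂], δ/2, by positivity, ?_⟩
  intro y hy
  have hEpos : (0:ℝ) < Real.exp (-(δ/2) * y) := Real.exp_pos _
  have hCle : ∀ c : ℝ, c ≤ max C₁ C₂ → c * Real.exp (-(δ/2)*y) ≤
      (max C₁ C₂ + 1) * Real.exp (-(δ/2)*y) := by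
    intro c hc
    apply mul_le_mul_of_nonneg_right (by linarith) hEpos.le
  rcases le_total y 3 with h3 | h3
  · -- 1 ≤ y ≤ 3
    have hgu : g y * u y ≤ 24 * u 1 := by
      have h1 : u y ≤ u 1 := uanti (mem_Ici.2 le_rfl) hy hy
      have h2 : g y ≤ 8 * y := g_le y hy
      nlinarith [hpos y (by linarith), g_pos y]
    have hE3 : Real.exp (-(3*δ/2)) ≤ Real.exp (-(δ/2)*y) := by
      apply Real.exp_le_exp.2; nlinarith
    calc g y * u y ≤ 24 * u 1 := hgu
      _ = C₂ * Real.exp (-(3*δ/2)) := by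
          rw [hC₂def, mul_assoc, ← Real.exp_add]; norm_num
      _ ≤ C₂ * Real.exp (-(δ/2)*y) := mul_le_mul_of_nonneg_left hE3 hC₂
      _ ≤ (max C₁ C₂ + 1) * Real.exp (-(δ/2)*y) := hCle C₂ (le_max_right _ _)
  · -- y ≥ 3
    have hu3 := hudecay y h3
    set E := Real.exp (-(δ/2)*y) with hEdef
    have he1 : Real.exp (-δ*(y-1)) = Real.exp δ * E^2 := by
      rw [hEdef, pow_two, ← Real.exp_add, ← Real.exp_add]
      ring_nf
    have h8 : 8 * y * E ≤ 16 / δ := by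
      have hT : δ/2 * y ≤ Real.exp (δ/2 * y) := by
        linarith [Real.add_one_le_exp (δ/2 * y)]
      have h9 : 8 * y ≤ 16/δ * Real.exp (δ/2*y) := by
        have := mul_le_mul_of_nonneg_left hT (by positivity : (0:ℝ) ≤ 16/δ)
        calc 8 * y = 16/δ * (δ/2 * y) := by field_simp; ring
          _ ≤ 16/δ * Real.exp (δ/2*y) := this
      rw [hEdef, show -(δ/2)*y = -(δ/2*y) by ring, Real.exp_neg,
        mul_inv_le_iff₀ (Real.exp_pos _)]
      linarith
    have hgu : g y * u y ≤ 8 * y * (Real.sqrt B * (Real.exp δ * E^2)) := by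
      rw [← he1]
      apply mul_le_mul (g_le y (by linarith)) hu3 (hpos y (by linarith)).le (by linarith)
    calc g y * u y ≤ 8 * y * (Real.sqrt B * (Real.exp δ * E^2)) := hgu
      _ = (Real.sqrt B * Real.exp δ * E) * (8 * y * E) := by ring
      _ ≤ (Real.sqrt B * Real.exp δ * E) * (16/δ) := by
          apply mul_le_mul_of_nonneg_left h8 (by positivity)
      _ = C₁ * E := by rw [hC₁def]; ring
      _ ≤ (max C₁ C₂ + 1) * E := hCle C₁ (le_max_left _ _)

/-- Qualitative properties of positive solutions of `(g u')' = λ g u`, `λ > 0`,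
on the weighted half-line: `g u'` is nondecreasing and tends to `0` at `+∞`,
`u' ≤ 0` on `(0,∞)`, and `g u` decays exponentially on `[1,∞)`. -/
theorem stmt16 (lam : ℝ) (hlam : 0 < lam) (u : ℝ → ℝ)
    (hcont : ContinuousOn u (Ici 0)) (hpos : ∀ x : ℝ, 0 ≤ x → 0 < u x)
    (hC1 : ContDiffOn ℝ 1 u (Ioi 0))
    (hint : IntegrableOn (fun x => (u x) ^ 2 * g x) (Ioi 0))
    (hint' : IntegrableOn (fun x => (deriv u x) ^ 2 * g x) (Ioi 0))
    (G : ℝ → ℝ) (hGcont : ContinuousOn G (Ici 0))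
    (hGeq : ∀ x ∈ Ioi (0 : ℝ), G x = g x * deriv u x)
    (hode : ∀ x ∈ Ioo (0 : ℝ) 1 ∪ Ioi 1, HasDerivAt G (lam * g x * u x) x) :
    (MonotoneOn G (Ici 0) ∧ Filter.Tendsto G Filter.atTop (nhds 0)) ∧
      (∀ x ∈ Ioi (0 : ℝ), deriv u x ≤ 0) ∧
      ∃ C : ℝ, 0 < C ∧ ∃ δ : ℝ, 0 < δ ∧
        ∀ x : ℝ, 1 ≤ x → g x * u x ≤ C * Real.exp (-δ * x) := by
  -- u differentiable with HasDerivAt on Ioi 0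
  have hu' : ∀ x ∈ Ioi (0:ℝ), HasDerivAt u (deriv u x) x := by
    intro x hx
    exact (((hC1.differentiableOn one_ne_zero) x hx).differentiableAt
      (Ioi_mem_nhds hx)).hasDerivAt
  have hu'cont : ContinuousOn (deriv u) (Ioi 0) :=
    hC1.continuousOn_deriv_of_isOpen isOpen_Ioi le_rfl
  -- monotonicity of G
  have Gmono : MonotoneOn G (Ici (0:ℝ)) := by
    have h1 : MonotoneOn G (Icc (0:ℝ) 1) := by
      apply monotoneOn_of_deriv_nonneg (convex_Icc 0 1) (hGcont.mono Icc_subset_Ici_self)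
      · intro x hx
        rw [interior_Icc] at hx
        exact ((hode x (Or.inl hx)).differentiableAt).differentiableWithinAt
      · intro x hx
        rw [interior_Icc] at hx
        rw [(hode x (Or.inl hx)).deriv]
        have := hpos x hx.1.le
        linarith [mul_pos (mul_pos hlam (g_pos x)) this]
    have h2 : MonotoneOn G (Ici (1:ℝ)) := by
      apply monotoneOn_of_deriv_nonneg (convex_Ici 1)
        (hGcont.mono (Ici_subset_Ici.2 (by norm_num)))
      · intro x hx
        rw [interior_Ici] at hx
        exact ((hode x (Or.inr hx)).differentiableAt).differentiableWithinAt
      · intro x hx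
        rw [interior_Ici] at hx
        rw [(hode x (Or.inr hx)).deriv]
        have := hpos x (by linarith [mem_Ioi.1 hx])
        linarith [mul_pos (mul_pos hlam (g_pos x)) this]
    intro a ha b hb hab
    rcases le_total b 1 with h | h
    · exact h1 ⟨ha, hab.trans h⟩ ⟨hb, h⟩ hab
    · rcases le_total a 1 with h' | h'
      · exact (h1 ⟨ha, h'⟩ ⟨zero_le_one, le_rfl⟩ h').trans (h2 (mem_Ici.2 le_rfl) h h)
      · exact h2 h' (h'.trans hab) hab
  have Gnonpos : ∀ x ∈ Ici (0:ℝ), G x ≤ 0 := by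
    by_contra h
    push_neg at h
    obtain ⟨x₀, hx₀, hG⟩ := h
    set x₁ := x₀ + 1 with hx₁def
    have hx₁pos : (0:ℝ) < x₁ := by rw [hx₁def]; linarith [mem_Ici.1 hx₀]
    have hx₁mem : x₁ ∈ Ici (0:ℝ) := le_of_lt hx₁pos
    have hGx₁ : 0 < G x₁ := lt_of_lt_of_le hG (Gmono hx₀ hx₁mem (by linarith))
    have humono : MonotoneOn u (Ici x₁) := by
      apply monotoneOn_of_deriv_nonneg (convex_Ici x₁)
        (hcont.mono (Ici_subset_Ici.2 hx₁pos.le))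
      · intro x hx
        rw [interior_Ici] at hx
        exact ((hu' x (mem_Ioi.2 (hx₁pos.trans hx))).differentiableAt).differentiableWithinAt
      · intro x hx
        rw [interior_Ici] at hx
        have hx0 : (0:ℝ) < x := hx₁pos.trans hx
        have heq : G x = g x * deriv u x := hGeq x hx0
        have hGx : 0 < G x := lt_of_lt_of_le hGx₁ (Gmono hx₁mem (le_of_lt hx0) hx.le)
        nlinarith [g_pos x]
    have hu₁pos : 0 < u x₁ := hpos x₁ hx₁pos.le
    have hlow : ∀ x ∈ Ioi x₁, (4 * u x₁ ^ 2 : ℝ) ≤ u x ^ 2 * g x := by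
      intro x hx
      have h1 : u x₁ ≤ u x := humono (mem_Ici.2 le_rfl) (mem_Ici.2 (le_of_lt hx)) (le_of_lt hx)
      nlinarith [g_ge x]
    have hI : IntegrableOn (fun x => u x ^ 2 * g x) (Ioi x₁) :=
      hint.mono_set (Ioi_subset_Ioi hx₁pos.le)
    have hconst : IntegrableOn (fun _ : ℝ => (4 * u x₁ ^ 2 : ℝ)) (Ioi x₁) := by
      apply Integrable.mono' hI aestronglyMeasurable_const
      filter_upwards [ae_restrict_mem measurableSet_Ioi] with x hx
      rw [Real.norm_eq_abs, abs_of_nonneg (by positivity)]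
      exact hlow x hx
    rw [integrableOn_const_iff] at hconst
    rcases hconst with h | h
    · rw [enorm_eq_zero] at h; nlinarith
    · rw [Real.volume_Ioi] at h; exact (lt_irrefl _ h).elim
  -- (b)
  have hub : ∀ x ∈ Ioi (0:ℝ), deriv u x ≤ 0 := by
    intro x hx
    have heq := hGeq x hx
    have h0 := Gnonpos x (mem_Ici.2 (le_of_lt hx))
    by_contra h
    push_neg at h
    nlinarith [mul_pos (g_pos x) h]
  -- FTC
  have hFTC : ∀ a b : ℝ, 0 < a → a ≤ b → ∫ t in a..b, deriv u t = u b - u a := by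
    intro a b ha hab
    apply intervalIntegral.integral_eq_sub_of_hasDerivAt
    · intro t ht
      rw [uIcc_of_le hab] at ht
      exact hu' t (mem_Ioi.2 (lt_of_lt_of_le ha ht.1))
    · apply ContinuousOn.intervalIntegrable
      apply hu'cont.mono
      rw [uIcc_of_le hab]
      intro t ht; exact lt_of_lt_of_le ha ht.1
  -- tendsto
  have Gtend : Filter.Tendsto G Filter.atTop (nhds 0) := by
    set H : ℝ → ℝ := fun x => G (max x 0) with hH
    have Hmono : Monotone H := fun a b hab =>
      Gmono (le_max_right a 0) (le_max_right b 0) (max_le_max hab le_rfl)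
    have Hbdd : BddAbove (range H) := ⟨0, by
      rintro _ ⟨x, rfl⟩; exact Gnonpos _ (le_max_right x 0)⟩
    have Htend := tendsto_atTop_ciSup Hmono Hbdd
    have hLle : (⨆ i, H i) ≤ 0 := ciSup_le fun x => Gnonpos _ (le_max_right x 0)
    have hL0 : (⨆ i, H i) = 0 := by
      by_contra hne
      set L := ⨆ i, H i with hLdef
      have hL : L < 0 := lt_of_le_of_ne hLle hne
      have hGL : ∀ x : ℝ, 1 ≤ x → G x ≤ L := by
        intro x hx
        have h1 := le_ciSup Hbdd x
        rw [hH] at h1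
        simpa [max_eq_left (le_trans zero_le_one hx)] using h1
      have hu1 : 0 < u 1 := hpos 1 zero_le_one
      set b := Real.exp (8 * u 1 / (-L) + 1) with hbdef
      have hb1 : (1:ℝ) < b := by
        rw [hbdef]
        apply Real.one_lt_exp_iff.2
        have := div_pos (by linarith : (0:ℝ) < 8 * u 1) (by linarith : (0:ℝ) < -L)
        linarith
      have hlogb : Real.log b = 8 * u 1 / (-L) + 1 := Real.log_exp _
      have hint2 : ∫ t in (1:ℝ)..b, (L/8) * t⁻¹ = (L/8) * Real.log b := by
        rw [intervalIntegral.integral_const_mul, integral_inv (by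
          rw [uIcc_of_le hb1.le]; intro h; exact absurd h.1 (by norm_num)), div_one]
      have key : u b - u 1 ≤ (L/8) * Real.log b := by
        rw [← hFTC 1 b one_pos hb1.le, ← hint2]
        apply intervalIntegral.integral_mono_on hb1.le
        · apply ContinuousOn.intervalIntegrable
          apply hu'cont.mono
          rw [uIcc_of_le hb1.le]
          intro t ht; exact lt_of_lt_of_le one_pos ht.1
        · apply ContinuousOn.intervalIntegrable
          apply ContinuousOn.mul continuousOn_const
          apply ContinuousOn.inv₀ (continuousOn_id)
          rw [uIcc_of_le hb1.le]
          intro t ht; exact ne_of_gt (lt_of_lt_of_le one_pos ht.1)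
        · intro t ht
          have ht1 : (1:ℝ) ≤ t := ht.1
          have ht0 : (0:ℝ) < t := lt_of_lt_of_le one_pos ht1
          have h3 : g t * deriv u t ≤ L := (hGeq t ht0) ▸ hGL t ht1
          have hd : deriv u t ≤ 0 := hub t ht0
          have h4 : deriv u t * (8*t) ≤ deriv u t * g t :=
            mul_le_mul_of_nonpos_left (g_le t ht1) hd
          have h5 : deriv u t ≤ L / (8*t) := by
            rw [le_div_iff₀ (by positivity)]
            nlinarith
          calc deriv u t ≤ L / (8*t) := h5
            _ = L/8 * t⁻¹ := by rw [div_mul_eq_div_div_swap]; ring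
      rw [hlogb] at key
      have hident : (L/8) * (8 * u 1 / (-L) + 1) = -u 1 + L/8 := by
        field_simp [hne]
      rw [hident] at key
      have : u b ≤ L/8 := by linarith
      linarith [hpos b (by linarith)]
    rw [hL0] at Htend
    apply Filter.Tendsto.congr' _ Htend
    filter_upwards [Filter.eventually_ge_atTop (0:ℝ)] with x hx
    rw [hH]; simp [max_eq_left hx]
  set δ := Real.sqrt lam with hδdef
  have hδpos : 0 < δ := Real.sqrt_pos.2 hlam
  have hδ2 : δ^2 = lam := Real.sq_sqrt hlam.le
  -- u antitone on [1, ∞)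
  have uanti : AntitoneOn u (Ici (1:ℝ)) := by
    apply antitoneOn_of_deriv_nonpos (convex_Ici 1)
      (hcont.mono (Ici_subset_Ici.2 zero_le_one))
    · intro x hx
      rw [interior_Ici] at hx
      exact ((hu' x (mem_Ioi.2 (zero_lt_one.trans hx))).differentiableAt).differentiableWithinAt
    · intro x hx
      rw [interior_Ici] at hx
      exact hub x (mem_Ioi.2 (zero_lt_one.trans hx))
  -- ψ antitone
  set φ : ℝ → ℝ := fun x => -(G x * u x) with hφdef
  set ψ : ℝ → ℝ := fun x => φ x * Real.exp (2*δ*x) with hψdef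
  have hψD : ∀ x ∈ Ioi (1:ℝ), HasDerivAt ψ
      ((-(lam * g x * u x * u x + G x * deriv u x)) * Real.exp (2*δ*x)
        + φ x * (Real.exp (2*δ*x) * (2*δ))) x := by
    intro x hx
    have hx0 : (0:ℝ) < x := zero_lt_one.trans hx
    have hGu : HasDerivAt (fun y => G y * u y)
        (lam * g x * u x * u x + G x * deriv u x) x :=
      (hode x (Or.inr hx)).mul (hu' x hx0)
    have hexp : HasDerivAt (fun y => Real.exp (2*δ*y)) (Real.exp (2*δ*x) * (2*δ)) x := by
      have h1 : HasDerivAt (fun y : ℝ => 2*δ*y) (2*δ) x := by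
        simpa using (hasDerivAt_id x).const_mul (2*δ)
      exact h1.exp
    exact hGu.neg.mul hexp
  have hψanti : AntitoneOn ψ (Ici (1:ℝ)) := by
    apply antitoneOn_of_deriv_nonpos (convex_Ici 1)
    · apply ContinuousOn.mul
      · exact ((hGcont.mono (Ici_subset_Ici.2 zero_le_one)).mul
          (hcont.mono (Ici_subset_Ici.2 zero_le_one))).neg
      · exact (Real.continuous_exp.comp (continuous_const.mul continuous_id)).continuousOn
    · intro x hx
      rw [interior_Ici] at hx
      exact ((hψD x hx).differentiableAt).differentiableWithinAt
    · intro x hx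
      rw [interior_Ici] at hx
      rw [(hψD x hx).deriv]
      have hx0 : (0:ℝ) < x := zero_lt_one.trans hx
      have hGx := hGeq x hx0
      have hE := Real.exp_pos (2*δ*x)
      have hφx : φ x = g x * u x * (-(deriv u x)) := by
        rw [hφdef]; dsimp only; rw [hGx]; ring
      have hstuff : -(lam * g x * u x * u x + G x * deriv u x) + φ x * (2*δ) ≤ 0 := by
        rw [hφx, hGx, ← hδ2]
        nlinarith [mul_nonneg (g_pos x).le (sq_nonneg (δ * u x + deriv u x))]
      calc (-(lam * g x * u x * u x + G x * deriv u x)) * Real.exp (2*δ*x)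
            + φ x * (Real.exp (2*δ*x) * (2*δ))
          = Real.exp (2*δ*x) * (-(lam * g x * u x * u x + G x * deriv u x)
            + φ x * (2*δ)) := by ring
        _ ≤ 0 := mul_nonpos_iff.2 (Or.inl ⟨hE.le, hstuff⟩)
  -- φ decay
  have hφdecay : ∀ x : ℝ, 1 ≤ x →
      φ x ≤ (φ 1 * Real.exp (2*δ)) * Real.exp (-(2*δ*x)) := by
    intro x hx
    have h1 : ψ x ≤ ψ 1 := hψanti (mem_Ici.2 le_rfl) hx hx
    have h2 : φ x = ψ x * Real.exp (-(2*δ*x)) := by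
      rw [hψdef]; dsimp only
      rw [mul_assoc, ← Real.exp_add]
      simp
    rw [h2]
    calc ψ x * Real.exp (-(2*δ*x)) ≤ ψ 1 * Real.exp (-(2*δ*x)) :=
          mul_le_mul_of_nonneg_right h1 (Real.exp_pos _).le
      _ = (φ 1 * Real.exp (2*δ)) * Real.exp (-(2*δ*x)) := by rw [hψdef]; norm_num
  exact ⟨⟨Gmono, Gtend⟩, hub,
    partC lam hlam u hcont hpos G hGcont hGeq hode Gnonpos δ hδpos hδ2 uanti φ hφdef hφdecay⟩
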